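/- Let K ⊆ L be fields of characteristic 2 with L² ⊆ K and K ≠ L. Then there exist λ₁, λ₂, λ₃ ∈ Lˣ with λ₁²λ₂⁻¹ ∈ K, λ₁⁻¹λ₂²λ₃⁻¹ ∈ K, and λ₂⁻¹λ₃² ∈ K, but λ₁ ∉ K. -/

import Mathlib

/-- Let `K ⊆ L` be fields of characteristic 2 with `L² ⊆ K` and `K ≠ L`.  Then there
exist `λ₁, λ₂, λ₃ ∈ Lˣ` with `λ₁²λ₂⁻¹ ∈ K`, `λ₁⁻¹λ₂²λ₃⁻¹ ∈ K` and `λ₂⁻¹λ₃² ∈ K`,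
but `λ₁ ∉ K`. -/
theorem stmt4 {L : Type*} [Field L] [CharP L 2] (K : Subfield L)
    (hsq : ∀ x : L, x ^ 2 ∈ K) (hKL : K ≠ ⊤) :
    ∃ l1 l2 l3 : L, l1 ≠ 0 ∧ l2 ≠ 0 ∧ l3 ≠ 0 ∧
      l1 ^ 2 * l2⁻¹ ∈ K ∧ l1⁻¹ * l2 ^ 2 * l3⁻¹ ∈ K ∧ l2⁻¹ * l3 ^ 2 ∈ K ∧ l1 ∉ K := by
  obtain ⟨a, ha⟩ : ∃ a : L, a ∉ K := by
    by_contra h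
    push_neg at h
    exact hKL (Subfield.ext fun x => ⟨fun _ => trivial, fun _ => h x⟩)
  have ha0 : a ≠ 0 := fun h => ha (h ▸ K.zero_mem)
  refine ⟨a, a ^ 2, a, ha0, pow_ne_zero 2 ha0, ha0, ?_, ?_, ?_, ha⟩
  · rw [mul_inv_cancel₀ (pow_ne_zero 2 ha0)]; exact K.one_mem
  · have : a⁻¹ * (a ^ 2) ^ 2 * a⁻¹ = a ^ 2 := by field_simp
    rw [this]; exact hsq a
  · rw [inv_mul_cancel₀ (pow_ne_zero 2 ha0)]; exact K.one_mem
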